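/- Let F = (f_1,…,f_{2n+1}) : U → U' be a C² conformal diffeomorphism between open connected subsets of ℍⁿ with contact factor λ_F, and G = F⁻¹ = (g_1,…,g_{2n+1}). Then for all 1 ≤ k,ℓ ≤ n, on U: (Ỹ_ℓ g_k) ∘ F = −X_{n+k}( f_ℓ · λ_F^{-1} ) and (Ỹ_ℓ g_{n+k}) ∘ F = X_k( f_ℓ · λ_F^{-1} ). That is, ψ = −f_ℓ·λ_F^{-1} satisfies (Ỹ_ℓ g_k) ∘ F = X_{n+k}ψ and (Ỹ_ℓ g_{n+k}) ∘ F = −X_kψ. -/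

import Mathlib

open Set Matrix MeasureTheory

noncomputable section

/-- The underlying space of the `n`-th Heisenberg group: `ℝ^(2n+1)` with coordinates
`(x_1,…,x_n,y_1,…,y_n,t)`. -/
abbrev Heis (n : ℕ) := Fin (2*n+1) → ℝ

/-- Index of the coordinate `x_j`. -/
def xIdx {n : ℕ} (j : Fin n) : Fin (2*n+1) := ⟨j.1, by have := j.2; omega⟩

/-- Index of the coordinate `y_j`. -/
def yIdx {n : ℕ} (j : Fin n) : Fin (2*n+1) := ⟨n + j.1, by have := j.2; omega⟩

/-- Index of the coordinate `t`. -/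
def tIdx {n : ℕ} : Fin (2*n+1) := ⟨2*n, by omega⟩

/-- The index `k ∈ {1,…,2n}` viewed inside `{1,…,2n+1}`. -/
def hIdx {n : ℕ} (k : Fin (2*n)) : Fin (2*n+1) := ⟨k.1, by have := k.2; omega⟩

variable {n : ℕ} {E : Type*} [NormedAddCommGroup E] [NormedSpace ℝ E]

/-- Partial derivative `∂u/∂p_i`. -/
def pd (i : Fin (2*n+1)) (u : Heis n → E) (p : Heis n) : E :=
  fderiv ℝ u p (Pi.single i 1)

/-- The left-invariant vector field `X_j = ∂/∂x_j + 2 y_j ∂/∂t` as a differential operator. -/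
def Xop (j : Fin n) (u : Heis n → E) (p : Heis n) : E :=
  pd (xIdx j) u p + (2 * p (yIdx j)) • pd tIdx u p

/-- The left-invariant vector field `Y_j = ∂/∂y_j - 2 x_j ∂/∂t` as a differential operator. -/
def Yop (j : Fin n) (u : Heis n → E) (p : Heis n) : E :=
  pd (yIdx j) u p - (2 * p (xIdx j)) • pd tIdx u p

/-- The vector field `T = ∂/∂t`. -/
def Tvf (u : Heis n → E) (p : Heis n) : E := pd tIdx u p

/-- `X_k` for `k = 1,…,2n`, where `X_{n+j} = Y_j`. -/
def XYop (k : Fin (2*n)) (u : Heis n → E) (p : Heis n) : E :=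
  if h : (k : ℕ) < n then Xop ⟨k.1, h⟩ u p
  else Yop ⟨k.1 - n, by have := k.2; omega⟩ u p

/-- The right-invariant mirror `X̃_j = X_j - 4 y_j T`. -/
def Xtilde (j : Fin n) (u : Heis n → E) (p : Heis n) : E :=
  Xop j u p - (4 * p (yIdx j)) • Tvf u p

/-- The right-invariant mirror `Ỹ_j = Y_j + 4 x_j T`. -/
def Ytilde (j : Fin n) (u : Heis n → E) (p : Heis n) : E :=
  Yop j u p + (4 * p (xIdx j)) • Tvf u p

/-- The complexified horizontal operator `Z_j = ½(X_j - i Y_j)`. -/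
def Zop (j : Fin n) (u : Heis n → ℂ) (p : Heis n) : ℂ :=
  (1/2 : ℂ) * (Xop j u p - Complex.I * Yop j u p)

/-- The complexified horizontal operator `Z̄_j = ½(X_j + i Y_j)`. -/
def Zbar (j : Fin n) (u : Heis n → ℂ) (p : Heis n) : ℂ :=
  (1/2 : ℂ) * (Xop j u p + Complex.I * Yop j u p)

/-- The operator `L_c = -¼ Σ_j (X_j² + Y_j²) + c T`. -/
def Lop (c : ℝ) (u : Heis n → ℂ) (p : Heis n) : ℂ :=
  -(1/4 : ℂ) * (∑ j : Fin n, (Xop j (Xop j u) p + Yop j (Yop j u) p)) + (c : ℂ) * Tvf u p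

/-- The Heisenberg group law
`(x,y,t)*(x',y',t') = (x+x', y+y', t+t'-2x·y'+2x'·y)`. -/
def hmul (p q : Heis n) : Heis n := fun i =>
  if (i : ℕ) < 2*n then p i + q i
  else p i + q i - 2 * ∑ j : Fin n, p (xIdx j) * q (yIdx j)
    + 2 * ∑ j : Fin n, q (xIdx j) * p (yIdx j)

/-- The point `exp(s X_j) = (s e_j, 0, 0)`. -/
def expX (j : Fin n) (s : ℝ) : Heis n := fun i => if i = xIdx j then s else 0

/-- The point `exp(s Y_j) = (0, s e_j, 0)`. -/
def expY (j : Fin n) (s : ℝ) : Heis n := fun i => if i = yIdx j then s else 0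

/-- The point `exp(s T) = (0, 0, s)`. -/
def expT {n : ℕ} (s : ℝ) : Heis n := fun i => if i = tIdx then s else 0

/-- The standard contact form `α = dt + 2 Σ_k (x_k dy_k - y_k dx_k)` evaluated at the point `p`
on the tangent vector `v`. -/
def alphaForm (p v : Heis n) : ℝ :=
  v tIdx + 2 * ∑ j : Fin n, (p (xIdx j) * v (yIdx j) - p (yIdx j) * v (xIdx j))

/-- `F` is a contact map on `U` with (positive) contact factor `lam`: `F^*α = lam · α`. -/
def IsContact (U : Set (Heis n)) (F : Heis n → Heis n) (lam : Heis n → ℝ) : Prop :=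
  (∀ p ∈ U, 0 < lam p) ∧
  ∀ p ∈ U, ∀ v : Heis n, alphaForm (F p) (fderiv ℝ F p v) = lam p * alphaForm p v

/-- The horizontal differential `D₀F`, the `2n × 2n` matrix with entries `(D₀F)_{m,ℓ} = X_ℓ f_m`. -/
def D0 (F : Heis n → Heis n) (p : Heis n) : Matrix (Fin (2*n)) (Fin (2*n)) ℝ :=
  Matrix.of fun m ℓ => XYop ℓ (fun q => F q (hIdx m)) p

/-- The horizontal Jacobian `J₀F = det D₀F`. -/
def J0 (F : Heis n → Heis n) (p : Heis n) : ℝ := (D0 F p).det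

/-- `F` is conformal on `U` with contact factor `lam`: `F` is contact, `J₀F > 0`, and
`(D₀F)ᵀ (D₀F) = (J₀F)^{1/n} I_{2n}`. -/
def IsConformal (U : Set (Heis n)) (F : Heis n → Heis n) (lam : Heis n → ℝ) : Prop :=
  IsContact U F lam ∧ (∀ p ∈ U, 0 < J0 F p) ∧
  ∀ p ∈ U, (D0 F p)ᵀ * (D0 F p) = (J0 F p ^ (1 / (n : ℝ))) • (1 : Matrix (Fin (2*n)) (Fin (2*n)) ℝ)

/-- The full Jacobian matrix of `F : ℝ^{2n+1} → ℝ^{2n+1}` at `p`. -/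
def fullJac (F : Heis n → Heis n) (p : Heis n) : Matrix (Fin (2*n+1)) (Fin (2*n+1)) ℝ :=
  Matrix.of fun i j => pd j (fun q => F q i) p

end

noncomputable section AuxPotential
open ContinuousLinearMap
variable {n : ℕ}


@[simp] lemma xIdx_inj {j k : Fin n} : xIdx j = xIdx k ↔ j = k := by
  simp only [xIdx, Fin.mk.injEq]
  exact ⟨fun h => Fin.ext h, fun h => by rw [h]⟩
@[simp] lemma yIdx_inj {j k : Fin n} : yIdx j = yIdx k ↔ j = k := by
  simp only [yIdx, Fin.mk.injEq]
  exact ⟨fun h => Fin.ext (by omega), fun h => by rw [h]⟩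
@[simp] lemma xIdx_ne_yIdx {j k : Fin n} : xIdx j ≠ yIdx k := by
  have := j.2; simp only [xIdx, yIdx, Ne, Fin.mk.injEq]; omega
@[simp] lemma yIdx_ne_xIdx {j k : Fin n} : yIdx j ≠ xIdx k := by
  have := k.2; simp only [xIdx, yIdx, Ne, Fin.mk.injEq]; omega
@[simp] lemma xIdx_ne_tIdx {j : Fin n} : xIdx j ≠ tIdx := by
  have := j.2; simp only [xIdx, tIdx, Ne, Fin.mk.injEq]; omega
@[simp] lemma tIdx_ne_xIdx {j : Fin n} : tIdx ≠ xIdx j := by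
  have := j.2; simp only [xIdx, tIdx, Ne, Fin.mk.injEq]; omega
@[simp] lemma yIdx_ne_tIdx {j : Fin n} : yIdx j ≠ tIdx := by
  have := j.2; simp only [yIdx, tIdx, Ne, Fin.mk.injEq]; omega
@[simp] lemma tIdx_ne_yIdx {j : Fin n} : tIdx ≠ yIdx j := by
  have := j.2; simp only [yIdx, tIdx, Ne, Fin.mk.injEq]; omega

lemma alphaForm_add (p u v : Heis n) :
    alphaForm p (u + v) = alphaForm p u + alphaForm p v := by
  simp only [alphaForm, Pi.add_apply]
  rw [show (∑ j : Fin n, (p (xIdx j) * (u (yIdx j) + v (yIdx j)) -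
        p (yIdx j) * (u (xIdx j) + v (xIdx j)))) =
      ∑ j : Fin n, ((p (xIdx j) * u (yIdx j) - p (yIdx j) * u (xIdx j)) +
        (p (xIdx j) * v (yIdx j) - p (yIdx j) * v (xIdx j))) from
    Finset.sum_congr rfl (fun j _ => by ring), Finset.sum_add_distrib]
  ring

lemma alphaForm_smul (p v : Heis n) (c : ℝ) :
    alphaForm p (c • v) = c * alphaForm p v := by
  simp only [alphaForm, Pi.smul_apply, smul_eq_mul]
  rw [show (∑ j : Fin n, (p (xIdx j) * (c * v (yIdx j)) - p (yIdx j) * (c * v (xIdx j)))) =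
      ∑ j : Fin n, c * (p (xIdx j) * v (yIdx j) - p (yIdx j) * v (xIdx j)) from
    Finset.sum_congr rfl (fun j _ => by ring), ← Finset.mul_sum]
  ring

lemma alpha_hasFDerivAt {a b : Heis n → Heis n} {a' b' : Heis n →L[ℝ] Heis n} {p : Heis n}
    (ha : HasFDerivAt a a' p) (hb : HasFDerivAt b b' p) :
    ∃ D : Heis n →L[ℝ] ℝ, HasFDerivAt (fun q => alphaForm (a q) (b q)) D p ∧
      ∀ w, D w = alphaForm (a p) (b' w) +
        2 * ∑ j : Fin n, (a' w (xIdx j) * b p (yIdx j) - a' w (yIdx j) * b p (xIdx j)) := by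
  have hai : ∀ i, HasFDerivAt (fun q => a q i) ((ContinuousLinearMap.proj i).comp a') p :=
    fun i => ((ContinuousLinearMap.proj i : Heis n →L[ℝ] ℝ).hasFDerivAt.comp p ha :)
  have hbi : ∀ i, HasFDerivAt (fun q => b q i) ((ContinuousLinearMap.proj i).comp b') p :=
    fun i => ((ContinuousLinearMap.proj i : Heis n →L[ℝ] ℝ).hasFDerivAt.comp p hb :)
  have hsum : HasFDerivAt
      (fun q => ∑ j : Fin n, (a q (xIdx j) * b q (yIdx j) - a q (yIdx j) * b q (xIdx j)))
      (∑ j : Fin n,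
        ((a p (xIdx j) • ((ContinuousLinearMap.proj (yIdx j)).comp b')
          + b p (yIdx j) • ((ContinuousLinearMap.proj (xIdx j)).comp a'))
         - (a p (yIdx j) • ((ContinuousLinearMap.proj (xIdx j)).comp b')
          + b p (xIdx j) • ((ContinuousLinearMap.proj (yIdx j)).comp a')))) p :=
    HasFDerivAt.fun_sum (fun j _ => ((hai _).mul (hbi _)).sub ((hai _).mul (hbi _)))
  refine ⟨_, (hbi tIdx).add (hsum.const_mul 2), fun w => ?_⟩
  simp only [ContinuousLinearMap.add_apply, ContinuousLinearMap.coe_comp',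
    Function.comp_apply, ContinuousLinearMap.proj_apply, ContinuousLinearMap.smul_apply,
    ContinuousLinearMap.coe_sum', Finset.sum_apply, ContinuousLinearMap.sub_apply,
    smul_eq_mul, alphaForm]
  rw [show (∑ j : Fin n,
      (a p (xIdx j) * b' w (yIdx j) + b p (yIdx j) * a' w (xIdx j)
        - (a p (yIdx j) * b' w (xIdx j) + b p (xIdx j) * a' w (yIdx j)))) =
    ∑ j : Fin n, ((a p (xIdx j) * b' w (yIdx j) - a p (yIdx j) * b' w (xIdx j))
      + (a' w (xIdx j) * b p (yIdx j) - a' w (yIdx j) * b p (xIdx j))) from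
    Finset.sum_congr rfl (fun j _ => by ring), Finset.sum_add_distrib]
  ring

def vecX {n : ℕ} (k : Fin n) (c : ℝ) : Heis n := (Pi.single (xIdx k) 1 : Heis n) + c • (Pi.single tIdx 1 : Heis n)
def vecY {n : ℕ} (l : Fin n) (c : ℝ) : Heis n := (Pi.single (yIdx l) 1 : Heis n) + c • (Pi.single tIdx 1 : Heis n)

@[simp] lemma vecX_x (k j : Fin n) (c : ℝ) : vecX k c (xIdx j) = if j = k then 1 else 0 := by
  simp [vecX, Pi.single_apply]
@[simp] lemma vecX_y (k j : Fin n) (c : ℝ) : vecX k c (yIdx j) = 0 := by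
  simp [vecX, Pi.single_apply]
@[simp] lemma vecX_t (k : Fin n) (c : ℝ) : vecX k c tIdx = c := by
  simp [vecX, Pi.single_apply]
@[simp] lemma vecY_x (l j : Fin n) (c : ℝ) : vecY l c (xIdx j) = 0 := by
  simp [vecY, Pi.single_apply]
@[simp] lemma vecY_y (l j : Fin n) (c : ℝ) : vecY l c (yIdx j) = if j = l then 1 else 0 := by
  simp [vecY, Pi.single_apply]
@[simp] lemma vecY_t (l : Fin n) (c : ℝ) : vecY l c tIdx = c := by
  simp [vecY, Pi.single_apply]

lemma sum_vecX_left (k : Fin n) (c : ℝ) (v : Heis n) :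
    ∑ j : Fin n, (vecX k c (xIdx j) * v (yIdx j) - vecX k c (yIdx j) * v (xIdx j)) = v (yIdx k) := by
  simp [ite_mul, Finset.sum_ite_eq']

lemma sum_vecX_right (k : Fin n) (c : ℝ) (v : Heis n) :
    ∑ j : Fin n, (v (xIdx j) * vecX k c (yIdx j) - v (yIdx j) * vecX k c (xIdx j)) = - v (yIdx k) := by
  simp [mul_ite, Finset.sum_ite_eq']

lemma sum_vecY_left (l : Fin n) (c : ℝ) (v : Heis n) :
    ∑ j : Fin n, (vecY l c (xIdx j) * v (yIdx j) - vecY l c (yIdx j) * v (xIdx j)) = - v (xIdx l) := by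
  simp [ite_mul, Finset.sum_ite_eq']

lemma sum_vecY_right (l : Fin n) (c : ℝ) (v : Heis n) :
    ∑ j : Fin n, (v (xIdx j) * vecY l c (yIdx j) - v (yIdx j) * vecY l c (xIdx j)) = v (xIdx l) := by
  simp [mul_ite, Finset.sum_ite_eq']

lemma alphaForm_vecX (q : Heis n) (k : Fin n) (c : ℝ) :
    alphaForm q (vecX k c) = c - 2 * q (yIdx k) := by
  rw [alphaForm, sum_vecX_right]; simp; try ring

lemma alphaForm_vecY (q : Heis n) (l : Fin n) (c : ℝ) :
    alphaForm q (vecY l c) = c + 2 * q (xIdx l) := by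
  rw [alphaForm, sum_vecY_right]; simp; try ring

lemma alphaForm_single_t (q : Heis n) : alphaForm q (Pi.single tIdx (1:ℝ)) = 1 := by
  simp [alphaForm, Pi.single_apply]

lemma hasFDerivAt_vecX_comp {f : Heis n → ℝ} {f' : Heis n →L[ℝ] ℝ} {p : Heis n} (k : Fin n)
    (hf : HasFDerivAt f f' p) :
    HasFDerivAt (fun q => vecX k (f q)) (f'.smulRight (Pi.single tIdx 1 : Heis n)) p :=
  ((hf.smul_const (Pi.single tIdx 1 : Heis n)).const_add (Pi.single (xIdx k) 1 : Heis n) :)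

lemma hasFDerivAt_vecY_comp {f : Heis n → ℝ} {f' : Heis n →L[ℝ] ℝ} {p : Heis n} (l : Fin n)
    (hf : HasFDerivAt f f' p) :
    HasFDerivAt (fun q => vecY l (f q)) (f'.smulRight (Pi.single tIdx 1 : Heis n)) p :=
  ((hf.smul_const (Pi.single tIdx 1 : Heis n)).const_add (Pi.single (yIdx l) 1 : Heis n) :)

end AuxPotential

/-- Let `F : U → U'` be a `C²` conformal diffeomorphism with contact factor
`λ_F` and inverse `G`. Then for all `1 ≤ k,ℓ ≤ n`, on `U`:
`(Ỹ_ℓ g_k) ∘ F = -X_{n+k}(f_ℓ · λ_F⁻¹)` and `(Ỹ_ℓ g_{n+k}) ∘ F = X_k(f_ℓ · λ_F⁻¹)`;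
that is, `ψ = -f_ℓ · λ_F⁻¹` is a potential for `Ỹ_ℓ`. -/
theorem potential_for_Ytilde {n : ℕ}
    (U U' : Set (Heis n)) (hU : IsOpen U) (hU' : IsOpen U')
    (hUconn : IsConnected U) (hU'conn : IsConnected U')
    (F G : Heis n → Heis n) (lamF : Heis n → ℝ)
    (hF : ContDiffOn ℝ 2 F U) (hG : ContDiffOn ℝ 2 G U')
    (hbij : Set.BijOn F U U') (hinv : Set.InvOn G F U U')
    (hconf : IsConformal U F lamF) :
    ∀ k ℓ : Fin n, ∀ p ∈ U,
      Ytilde ℓ (fun r => G r (xIdx k)) (F p)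
        = -Yop k (fun q => F q (xIdx ℓ) * (lamF q)⁻¹) p ∧
      Ytilde ℓ (fun r => G r (yIdx k)) (F p)
        = Xop k (fun q => F q (xIdx ℓ) * (lamF q)⁻¹) p := by
  obtain ⟨⟨hpos, hcon⟩, -, -⟩ := hconf
  intro k ℓ p hp
  have hp' : F p ∈ U' := hbij.mapsTo hp
  have hFd : ∀ q ∈ U, DifferentiableAt ℝ F q := fun q hq =>
    (hF.contDiffAt (hU.mem_nhds hq)).differentiableAt two_ne_zero
  have hGd : ∀ q ∈ U', DifferentiableAt ℝ G q := fun q hq =>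
    (hG.contDiffAt (hU'.mem_nhds hq)).differentiableAt two_ne_zero
  have hFdp : HasFDerivAt F (fderiv ℝ F p) p := (hFd p hp).hasFDerivAt
  have hGdp : HasFDerivAt G (fderiv ℝ G (F p)) (F p) := (hGd _ hp').hasFDerivAt
  have hDFd : DifferentiableAt ℝ (fderiv ℝ F) p :=
    ((hF.contDiffAt (hU.mem_nhds hp)).fderiv_right (m := 1) (by norm_num)).differentiableAt one_ne_zero
  have hD2 : HasFDerivAt (fderiv ℝ F) (fderiv ℝ (fderiv ℝ F) p) p := hDFd.hasFDerivAt
  have hG2d : DifferentiableAt ℝ (fderiv ℝ G) (F p) :=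
    ((hG.contDiffAt (hU'.mem_nhds hp')).fderiv_right (m := 1) (by norm_num)).differentiableAt one_ne_zero
  have hsymm : ∀ v w : Heis n, fderiv ℝ (fderiv ℝ F) p v w = fderiv ℝ (fderiv ℝ F) p w v := by
    have hev : ∀ᶠ y in nhds p, HasFDerivAt F (fderiv ℝ F y) y := by
      filter_upwards [hU.mem_nhds hp] with q hq
      exact (hFd q hq).hasFDerivAt
    exact fun v w => second_derivative_symmetric_of_eventually_of_real hev hD2 v w
  -- chain rule identities for the inverse
  have hGF : ∀ q ∈ U, ∀ v : Heis n, fderiv ℝ G (F q) (fderiv ℝ F q v) = v := by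
    intro q hq v
    have h1 : HasFDerivAt (fun x => G (F x)) ((fderiv ℝ G (F q)).comp (fderiv ℝ F q)) q :=
      ((hGd _ (hbij.mapsTo hq)).hasFDerivAt.comp q (hFd q hq).hasFDerivAt :)
    have h2 : HasFDerivAt (fun x : Heis n => x) ((fderiv ℝ G (F q)).comp (fderiv ℝ F q)) q := by
      apply h1.congr_of_eventuallyEq
      filter_upwards [hU.mem_nhds hq] with x hx
      exact (hinv.1 hx).symm
    have h3 := h2.unique (hasFDerivAt_id q)
    have h4 := congrArg (fun L : Heis n →L[ℝ] Heis n => L v) h3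
    simpa using h4
  have hFG : ∀ q ∈ U, ∀ v : Heis n, fderiv ℝ F q (fderiv ℝ G (F q) v) = v := by
    intro q hq v
    have hq' : F q ∈ U' := hbij.mapsTo hq
    have hGFq : G (F q) = q := hinv.1 hq
    have h1 : HasFDerivAt (fun y => F (G y))
        ((fderiv ℝ F (G (F q))).comp (fderiv ℝ G (F q))) (F q) :=
      ((hFd (G (F q)) (by rw [hGFq]; exact hq)).hasFDerivAt.comp (F q) (hGd _ hq').hasFDerivAt :)
    rw [hGFq] at h1
    have h2 : HasFDerivAt (fun y : Heis n => y) ((fderiv ℝ F q).comp (fderiv ℝ G (F q))) (F q) := by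
      apply h1.congr_of_eventuallyEq
      filter_upwards [hU'.mem_nhds hq'] with y hy
      exact (hinv.2 hy).symm
    have h3 := h2.unique (hasFDerivAt_id (F q))
    have h4 := congrArg (fun L : Heis n →L[ℝ] Heis n => L v) h3
    simpa using h4
  have hlamq : ∀ q ∈ U, alphaForm (F q) (fderiv ℝ F q (Pi.single tIdx 1 : Heis n)) = lamF q := by
    intro q hq
    rw [hcon q hq, alphaForm_single_t, mul_one]
  have hlam0 : lamF p ≠ 0 := ne_of_gt (hpos p hp)
  have hDpW : fderiv ℝ F p (fderiv ℝ G (F p) (vecY ℓ (2 * F p (xIdx ℓ))))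
      = vecY ℓ (2 * F p (xIdx ℓ)) := hFG p hp _
  -- derivative of the map q ↦ (dF q)⁻¹ applied to the right-invariant Y field along F
  have hflp : HasFDerivAt (fun q => F q (xIdx ℓ))
      ((ContinuousLinearMap.proj (xIdx ℓ) : Heis n →L[ℝ] ℝ).comp (fderiv ℝ F p)) p :=
    ((ContinuousLinearMap.proj (xIdx ℓ) : Heis n →L[ℝ] ℝ).hasFDerivAt.comp p hFdp :)
  have hv0f : HasFDerivAt (fun q => vecY ℓ (2 * F q (xIdx ℓ)))
      (((2:ℝ) • ((ContinuousLinearMap.proj (xIdx ℓ) : Heis n →L[ℝ] ℝ).comp (fderiv ℝ F p))).smulRight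
        (Pi.single tIdx 1 : Heis n)) p :=
    hasFDerivAt_vecY_comp ℓ (hflp.const_mul (2:ℝ))
  have hGc : HasFDerivAt (fun q => fderiv ℝ G (F q))
      ((fderiv ℝ (fderiv ℝ G) (F p)).comp (fderiv ℝ F p)) p :=
    (hG2d.hasFDerivAt.comp p hFdp :)
  obtain ⟨Wd, hWf⟩ :
      ∃ L : Heis n →L[ℝ] Heis n,
        HasFDerivAt (fun q => fderiv ℝ G (F q) (vecY ℓ (2 * F q (xIdx ℓ)))) L p :=
    ⟨_, hGc.clm_apply hv0f⟩
  -- the three differentiated quantities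
  obtain ⟨DL, hL, hLe⟩ := alpha_hasFDerivAt hFdp
    (hD2.clm_apply (hasFDerivAt_const (Pi.single tIdx 1 : Heis n) p))
  obtain ⟨DaW, haW, haWe⟩ := alpha_hasFDerivAt (hasFDerivAt_id p) hWf
  obtain ⟨DXi, hXi, hXie⟩ := alpha_hasFDerivAt hFdp (hD2.clm_apply hWf)
  have hTheta : HasFDerivAt
      (fun q => alphaForm (F q) (fderiv ℝ F q (Pi.single tIdx 1 : Heis n)) *
        alphaForm q (fderiv ℝ G (F q) (vecY ℓ (2 * F q (xIdx ℓ)))))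
      (alphaForm (F p) (fderiv ℝ F p (Pi.single tIdx 1 : Heis n)) • DaW +
        alphaForm p (fderiv ℝ G (F p) (vecY ℓ (2 * F p (xIdx ℓ)))) • DL) p := hL.mul haW
  have hXiTheta : DXi
      = alphaForm (F p) (fderiv ℝ F p (Pi.single tIdx 1 : Heis n)) • DaW +
        alphaForm p (fderiv ℝ G (F p) (vecY ℓ (2 * F p (xIdx ℓ)))) • DL := by
    refine hXi.unique (hTheta.congr_of_eventuallyEq ?_)
    filter_upwards [hU.mem_nhds hp] with q hq
    rw [hcon q hq (fderiv ℝ G (F q) (vecY ℓ (2 * F q (xIdx ℓ)))), hlamq q hq]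
  have eq3 : lamF p * alphaForm p (fderiv ℝ G (F p) (vecY ℓ (2 * F p (xIdx ℓ))))
      = 4 * F p (xIdx ℓ) := by
    have h := hcon p hp (fderiv ℝ G (F p) (vecY ℓ (2 * F p (xIdx ℓ))))
    rw [hDpW, alphaForm_vecY] at h
    linarith
  -- the key identity, for a horizontal left-invariant field `uv`
  have key : ∀ (uv : Heis n → Heis n) (uv' : Heis n →L[ℝ] Heis n) (m : ℝ),
      HasFDerivAt uv uv' p →
      (∀ q, alphaForm q (uv q) = 0) →
      uv' (fderiv ℝ G (F p) (vecY ℓ (2 * F p (xIdx ℓ)))) = (2 * m) • (Pi.single tIdx 1 : Heis n) →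
      (∑ j : Fin n, (uv p (xIdx j) * (fderiv ℝ G (F p) (vecY ℓ (2 * F p (xIdx ℓ)))) (yIdx j)
        - uv p (yIdx j) * (fderiv ℝ G (F p) (vecY ℓ (2 * F p (xIdx ℓ)))) (xIdx j))) = m →
      lamF p * fderiv ℝ F p (uv p) (xIdx ℓ)
        = lamF p ^ 2 * m + F p (xIdx ℓ) * DL (uv p) := by
    intro uv uv' m huv hzero huvW homg
    obtain ⟨DPhi, hPhi, hPhie⟩ := alpha_hasFDerivAt hFdp (hD2.clm_apply huv)
    have hPhi0 : DPhi = 0 := by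
      refine hPhi.unique ?_
      refine (hasFDerivAt_const (0:ℝ) p).congr_of_eventuallyEq ?_
      filter_upwards [hU.mem_nhds hp] with q hq
      rw [hcon q hq, hzero q, mul_zero]
    have eq1 : 0 = 2 * m * lamF p
        + alphaForm (F p)
            (fderiv ℝ (fderiv ℝ F) p (uv p) (fderiv ℝ G (F p) (vecY ℓ (2 * F p (xIdx ℓ)))))
        - 2 * fderiv ℝ F p (uv p) (xIdx ℓ) := by
      have h := hPhie (fderiv ℝ G (F p) (vecY ℓ (2 * F p (xIdx ℓ))))
      rw [hPhi0] at h
      simp only [ContinuousLinearMap.zero_apply, ContinuousLinearMap.add_apply,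
        ContinuousLinearMap.coe_comp', Function.comp_apply,
        ContinuousLinearMap.flip_apply] at h
      rw [huvW, _root_.map_smul, alphaForm_add, alphaForm_smul, hDpW, sum_vecY_left,
        hlamq p hp, hsymm] at h
      linarith
    have h1 := hXie (uv p)
    simp only [ContinuousLinearMap.add_apply, ContinuousLinearMap.coe_comp',
      Function.comp_apply, ContinuousLinearMap.flip_apply] at h1
    rw [hDpW, sum_vecY_right, alphaForm_add, hcon p hp (Wd (uv p))] at h1
    have h2 := congrArg (fun L : Heis n →L[ℝ] ℝ => L (uv p)) hXiTheta
    simp only [ContinuousLinearMap.add_apply, ContinuousLinearMap.smul_apply,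
      smul_eq_mul] at h2
    rw [haWe (uv p)] at h2
    simp only [ContinuousLinearMap.coe_id', id_eq] at h2
    rw [homg, hlamq p hp] at h2
    -- h1 : DXi (uv p) = lamF p * alphaForm p (Wd (uv p)) + alphaForm (F p) (D2 (uv p) W) + 2 * A
    -- h2 : DXi (uv p) = lamF p * (alphaForm p (Wd (uv p)) + 2 * m) + aW * DL (uv p)
    have eq2 : 4 * fderiv ℝ F p (uv p) (xIdx ℓ)
        = 4 * lamF p * m
          + alphaForm p (fderiv ℝ G (F p) (vecY ℓ (2 * F p (xIdx ℓ)))) * DL (uv p) := by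
      linear_combination h2 - h1 + eq1
    linear_combination (lamF p / 4) * eq2 + (DL (uv p) / 4) * eq3
  -- identification of the left-hand sides
  have hgLHS : ∀ i : Fin (2*n+1), Ytilde ℓ (fun r => G r i) (F p)
      = fderiv ℝ G (F p) (vecY ℓ (2 * F p (xIdx ℓ))) i := by
    intro i
    have hfg : fderiv ℝ (fun r => G r i) (F p)
        = (ContinuousLinearMap.proj i : Heis n →L[ℝ] ℝ).comp (fderiv ℝ G (F p)) :=
      (((ContinuousLinearMap.proj i : Heis n →L[ℝ] ℝ).hasFDerivAt.comp (F p) hGdp :)).fderiv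
    simp only [Ytilde, Yop, Tvf, pd, hfg, ContinuousLinearMap.coe_comp', Function.comp_apply,
      ContinuousLinearMap.proj_apply, smul_eq_mul]
    rw [show vecY ℓ (2 * F p (xIdx ℓ))
        = (Pi.single (yIdx ℓ) 1 : Heis n) + (2 * F p (xIdx ℓ)) • (Pi.single tIdx 1 : Heis n)
        from rfl, _root_.map_add, _root_.map_smul]
    simp only [Pi.add_apply, Pi.smul_apply, smul_eq_mul]
    ring
  -- the right-hand side derivative
  have hlamne : alphaForm (F p) (fderiv ℝ F p (Pi.single tIdx 1 : Heis n)) ≠ 0 := by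
    rw [hlamq p hp]; exact hlam0
  have hinvd : HasFDerivAt
      (fun q => (alphaForm (F q) (fderiv ℝ F q (Pi.single tIdx 1 : Heis n)))⁻¹)
      ((-ContinuousLinearMap.mulLeftRight ℝ ℝ
          (alphaForm (F p) (fderiv ℝ F p (Pi.single tIdx 1 : Heis n)))⁻¹
          (alphaForm (F p) (fderiv ℝ F p (Pi.single tIdx 1 : Heis n)))⁻¹).comp DL) p :=
    ((hasFDerivAt_inv' hlamne).comp p hL :)
  have hprod : HasFDerivAt
      (fun q => F q (xIdx ℓ) * (alphaForm (F q) (fderiv ℝ F q (Pi.single tIdx 1 : Heis n)))⁻¹)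
      (F p (xIdx ℓ) • ((-ContinuousLinearMap.mulLeftRight ℝ ℝ
          (alphaForm (F p) (fderiv ℝ F p (Pi.single tIdx 1 : Heis n)))⁻¹
          (alphaForm (F p) (fderiv ℝ F p (Pi.single tIdx 1 : Heis n)))⁻¹).comp DL)
        + (alphaForm (F p) (fderiv ℝ F p (Pi.single tIdx 1 : Heis n)))⁻¹ •
          ((ContinuousLinearMap.proj (xIdx ℓ) : Heis n →L[ℝ] ℝ).comp (fderiv ℝ F p))) p :=
    hflp.mul hinvd
  have hfe : fderiv ℝ (fun q => F q (xIdx ℓ) * (lamF q)⁻¹) p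
      = F p (xIdx ℓ) • ((-ContinuousLinearMap.mulLeftRight ℝ ℝ
          (alphaForm (F p) (fderiv ℝ F p (Pi.single tIdx 1 : Heis n)))⁻¹
          (alphaForm (F p) (fderiv ℝ F p (Pi.single tIdx 1 : Heis n)))⁻¹).comp DL)
        + (alphaForm (F p) (fderiv ℝ F p (Pi.single tIdx 1 : Heis n)))⁻¹ •
          ((ContinuousLinearMap.proj (xIdx ℓ) : Heis n →L[ℝ] ℝ).comp (fderiv ℝ F p)) := by
    rw [Filter.EventuallyEq.fderiv_eq
      (f := fun q => F q (xIdx ℓ) * (alphaForm (F q) (fderiv ℝ F q (Pi.single tIdx 1 : Heis n)))⁻¹)]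
    · exact hprod.fderiv
    · filter_upwards [hU.mem_nhds hp] with q hq
      rw [hlamq q hq]
  have hDh : ∀ w : Heis n, fderiv ℝ (fun q => F q (xIdx ℓ) * (lamF q)⁻¹) p w
      = F p (xIdx ℓ) * (-((lamF p)⁻¹ * DL w * (lamF p)⁻¹))
        + (lamF p)⁻¹ * fderiv ℝ F p w (xIdx ℓ) := by
    intro w
    rw [hfe]
    simp only [ContinuousLinearMap.add_apply, ContinuousLinearMap.smul_apply, smul_eq_mul,
      ContinuousLinearMap.coe_comp', Function.comp_apply, ContinuousLinearMap.neg_apply,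
      ContinuousLinearMap.mulLeftRight_apply, ContinuousLinearMap.proj_apply, hlamq p hp]
  constructor
  · -- first component : uses the Y_k field
    have hyvd : HasFDerivAt (fun q => vecY k (-(2 * q (xIdx k))))
        ((-((2:ℝ) • (ContinuousLinearMap.proj (xIdx k) : Heis n →L[ℝ] ℝ))).smulRight
          (Pi.single tIdx 1 : Heis n)) p :=
      hasFDerivAt_vecY_comp k
        (((ContinuousLinearMap.proj (xIdx k) : Heis n →L[ℝ] ℝ).hasFDerivAt.const_mul (2:ℝ)).neg)
    have keyY := key (fun q => vecY k (-(2 * q (xIdx k)))) _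
      (-(fderiv ℝ G (F p) (vecY ℓ (2 * F p (xIdx ℓ))) (xIdx k))) hyvd
      (fun q => by rw [alphaForm_vecY]; ring)
      (by
        simp only [ContinuousLinearMap.smulRight_apply, ContinuousLinearMap.neg_apply,
          ContinuousLinearMap.smul_apply, ContinuousLinearMap.proj_apply, smul_eq_mul]
        congr 1
        ring)
      (by
        rw [sum_vecY_left])
    rw [hgLHS (xIdx k)]
    have hYop : Yop k (fun q => F q (xIdx ℓ) * (lamF q)⁻¹) p
        = fderiv ℝ (fun q => F q (xIdx ℓ) * (lamF q)⁻¹) p (vecY k (-(2 * p (xIdx k)))) := by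
      simp only [Yop, pd, smul_eq_mul]
      rw [show vecY k (-(2 * p (xIdx k)))
          = (Pi.single (yIdx k) 1 : Heis n) + (-(2 * p (xIdx k))) • (Pi.single tIdx 1 : Heis n)
          from rfl, _root_.map_add, _root_.map_smul, smul_eq_mul]
      ring
    rw [hYop, hDh]
    field_simp
    linear_combination keyY
  · -- second component : uses the X_k field
    have hxvd : HasFDerivAt (fun q => vecX k (2 * q (yIdx k)))
        (((2:ℝ) • (ContinuousLinearMap.proj (yIdx k) : Heis n →L[ℝ] ℝ)).smulRight
          (Pi.single tIdx 1 : Heis n)) p :=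
      hasFDerivAt_vecX_comp k
        ((ContinuousLinearMap.proj (yIdx k) : Heis n →L[ℝ] ℝ).hasFDerivAt.const_mul (2:ℝ))
    have keyX := key (fun q => vecX k (2 * q (yIdx k))) _
      (fderiv ℝ G (F p) (vecY ℓ (2 * F p (xIdx ℓ))) (yIdx k)) hxvd
      (fun q => by rw [alphaForm_vecX]; ring)
      (by
        simp only [ContinuousLinearMap.smulRight_apply, ContinuousLinearMap.smul_apply,
          ContinuousLinearMap.proj_apply, smul_eq_mul])
      (by
        rw [sum_vecX_left])
    rw [hgLHS (yIdx k)]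
    have hXop : Xop k (fun q => F q (xIdx ℓ) * (lamF q)⁻¹) p
        = fderiv ℝ (fun q => F q (xIdx ℓ) * (lamF q)⁻¹) p (vecX k (2 * p (yIdx k))) := by
      simp only [Xop, pd, smul_eq_mul]
      rw [show vecX k (2 * p (yIdx k))
          = (Pi.single (xIdx k) 1 : Heis n) + (2 * p (yIdx k)) • (Pi.single tIdx 1 : Heis n)
          from rfl, _root_.map_add, _root_.map_smul, smul_eq_mul]
    rw [hXop, hDh]
    field_simp
    linear_combination (-1 : ℝ) * keyX
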